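/- Let φ_1, φ_2 : Γ → K* be two splittings of the valuation (group homomorphisms with val ∘ φ_j = id on Γ), let w ∈ Γ^n, and let I ⊆ K[x_1^{±1},…,x_n^{±1}] be an ideal. Let in_w^{φ_j}(I) ⊆ k[x_1^{±1},…,x_n^{±1}] denote the initial ideal computed using the splitting φ_j. Then there is a k-algebra automorphism ψ of k[x_1^{±1},…,x_n^{±1}], given on variables by x_i ↦ (φ_1(w_i)/φ_2(w_i))‾ · x_i, such that ψ(in_w^{φ_2}(I)) = in_w^{φ_1}(I). -/

import Mathlib

open MvPolynomial
open scoped Classical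

noncomputable section

/-- Dot product `w·u` of a real weight vector with a nonnegative exponent vector. -/
def dotN {m : ℕ} (w : Fin m → ℝ) (u : Fin m →₀ ℕ) : ℝ := ∑ i, w i * (u i : ℝ)

/-- Dot product `w·u` of a real weight vector with an integer exponent vector. -/
def dotZ {n : ℕ} (w : Fin n → ℝ) (u : Fin n → ℤ) : ℝ := ∑ i, w i * (u i : ℝ)

/-- Dot product of two real vectors. -/
def dotR {m : ℕ} (c x : Fin m → ℝ) : ℝ := ∑ i, c i * x i

/-- A field `K` together with: a nontrivial real-valued (additive) valuation
`val : K* → ℝ` (recorded as a function on `K`, constrained only at nonzero elements);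
a residue field `𝕜` with the reduction map `res : K → 𝕜` (the canonical map
`R → 𝕜 = R/𝔪` on the valuation ring `R = {a : val a ≥ 0}`, junk elsewhere); and a fixed
splitting `t` of the valuation, i.e. a group-homomorphic section `w ↦ t^w` of `val`
defined on the value group `Γ = im val`. -/
structure ValSetup (K 𝕜 : Type) [Field K] [Field 𝕜] where
  val : K → ℝ
  val_mul : ∀ {a b : K}, a ≠ 0 → b ≠ 0 → val (a * b) = val a + val b
  val_add : ∀ {a b : K}, a ≠ 0 → b ≠ 0 → a + b ≠ 0 → min (val a) (val b) ≤ val (a + b)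
  val_one : val 1 = 0
  val_nontrivial : ∃ a : K, a ≠ 0 ∧ val a ≠ 0
  res : K → 𝕜
  res_add : ∀ {a b : K}, (a = 0 ∨ 0 ≤ val a) → (b = 0 ∨ 0 ≤ val b) → res (a + b) = res a + res b
  res_mul : ∀ {a b : K}, (a = 0 ∨ 0 ≤ val a) → (b = 0 ∨ 0 ≤ val b) → res (a * b) = res a * res b
  res_one : res 1 = 1
  res_zero : res 0 = 0
  res_eq_zero_iff : ∀ {a : K}, a ≠ 0 → 0 ≤ val a → (res a = 0 ↔ 0 < val a)
  res_surjective : ∀ c : 𝕜, ∃ a : K, (a = 0 ∨ 0 ≤ val a) ∧ res a = c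
  t : ℝ → K
  t_ne_zero : ∀ {r : ℝ}, (∃ a : K, a ≠ 0 ∧ val a = r) → t r ≠ 0
  t_add : ∀ {r₁ r₂ : ℝ}, (∃ a : K, a ≠ 0 ∧ val a = r₁) → (∃ a : K, a ≠ 0 ∧ val a = r₂) →
    t (r₁ + r₂) = t r₁ * t r₂
  val_t : ∀ {r : ℝ}, (∃ a : K, a ≠ 0 ∧ val a = r) → val (t r) = r

namespace ValSetup

variable {K 𝕜 : Type} [Field K] [Field 𝕜]

/-- The value group `Γ = val(K*) ⊆ ℝ`. -/
def Gamma (V : ValSetup K 𝕜) : Set ℝ := {r : ℝ | ∃ a : K, a ≠ 0 ∧ V.val a = r}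

/-- `trop(f)(w) = min { val(c_u) + w·u : c_u ≠ 0 }` for `f = Σ_u c_u x^u ∈ K[x_0,…,x_{m-1}]`. -/
def trop (V : ValSetup K 𝕜) {m : ℕ} (f : MvPolynomial (Fin m) K) (w : Fin m → ℝ) : ℝ :=
  sInf ((fun u => V.val (coeff u f) + dotN w u) '' (f.support : Set (Fin m →₀ ℕ)))

/-- The initial form `in_w(f) = Σ_{val(c_u)+w·u = trop(f)(w)} (t^{-val(c_u)} c_u)‾ x^u`
in `𝕜[x_0,…,x_{m-1}]`. -/
def initialForm (V : ValSetup K 𝕜) {m : ℕ} (w : Fin m → ℝ) (f : MvPolynomial (Fin m) K) :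
    MvPolynomial (Fin m) 𝕜 :=
  ∑ u ∈ f.support.filter (fun u => V.val (coeff u f) + dotN w u = V.trop f w),
    monomial u (V.res (V.t (-(V.val (coeff u f))) * coeff u f))

/-- The initial ideal `in_w(I) = ⟨in_w(f) : f ∈ I⟩ ⊆ 𝕜[x_0,…,x_{m-1}]`. -/
def initialIdeal (V : ValSetup K 𝕜) {m : ℕ} (w : Fin m → ℝ)
    (I : Ideal (MvPolynomial (Fin m) K)) : Ideal (MvPolynomial (Fin m) 𝕜) :=
  Ideal.span {g | ∃ f ∈ I, g = V.initialForm w f}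

/-- The Gröbner region `C_I[w] = {w' ∈ Γ^m : in_{w'}(I) = in_w(I)}`. -/
def groebnerRegion (V : ValSetup K 𝕜) {m : ℕ} (I : Ideal (MvPolynomial (Fin m) K))
    (w : Fin m → ℝ) : Set (Fin m → ℝ) :=
  {w' | (∀ i, w' i ∈ V.Gamma) ∧ V.initialIdeal w' I = V.initialIdeal w I}

end ValSetup

/-- `trop(g)(v) = min { v·u : c_u ≠ 0 }` for `g ∈ 𝕜[x]`, w.r.t. the trivial valuation on `𝕜`. -/
def tropTriv {𝕜 : Type} [Field 𝕜] {m : ℕ} (g : MvPolynomial (Fin m) 𝕜) (v : Fin m → ℝ) : ℝ :=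
  sInf ((fun u => dotN v u) '' (g.support : Set (Fin m →₀ ℕ)))

/-- Initial form `in_v(g)`, w.r.t. the trivial valuation on the residue field: the sum of the
terms of `g` whose exponents `u` minimize `v·u`. -/
def initialFormTriv {𝕜 : Type} [Field 𝕜] {m : ℕ} (v : Fin m → ℝ) (g : MvPolynomial (Fin m) 𝕜) :
    MvPolynomial (Fin m) 𝕜 :=
  ∑ u ∈ g.support.filter (fun u => dotN v u = tropTriv g v), monomial u (coeff u g)

/-- Initial ideal `in_v(J) = ⟨in_v(g) : g ∈ J⟩` w.r.t. the trivial valuation. -/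
def initialIdealTriv {𝕜 : Type} [Field 𝕜] {m : ℕ} (v : Fin m → ℝ)
    (J : Ideal (MvPolynomial (Fin m) 𝕜)) : Ideal (MvPolynomial (Fin m) 𝕜) :=
  Ideal.span {h | ∃ g ∈ J, h = initialFormTriv v g}

/-- A homogeneous ideal of `R[x_0,…,x_{m-1}]`: one containing all homogeneous components of
its elements. -/
def IsHomogIdeal {R : Type} [CommSemiring R] {m : ℕ} (I : Ideal (MvPolynomial (Fin m) R)) :
    Prop :=
  ∀ f ∈ I, ∀ d : ℕ, homogeneousComponent d f ∈ I

/-- A monomial ideal: an ideal generated by monomials. -/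
def IsMonomialIdeal {R : Type} [CommSemiring R] {m : ℕ} (J : Ideal (MvPolynomial (Fin m) R)) :
    Prop :=
  ∃ S : Set (Fin m →₀ ℕ), J = Ideal.span ((fun u => (monomial u 1 : MvPolynomial (Fin m) R)) '' S)

/-- The Laurent polynomial ring `K[x_1^{±1},…,x_n^{±1}]`, i.e. the monoid algebra of `ℤ^n`. -/
abbrev LaurentPoly (K : Type) [CommRing K] (n : ℕ) : Type := AddMonoidAlgebra K (Fin n → ℤ)

namespace ValSetup

variable {K 𝕜 : Type} [Field K] [Field 𝕜]

/-- `trop(f)(w)` for a Laurent polynomial `f`. -/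
def tropL (V : ValSetup K 𝕜) {n : ℕ} (f : LaurentPoly K n) (w : Fin n → ℝ) : ℝ :=
  sInf ((fun u => V.val (f.coeff u) + dotZ w u) '' (f.coeff.support : Set (Fin n → ℤ)))

/-- The initial form `in_w(f) ∈ 𝕜[x_1^{±1},…,x_n^{±1}]` of a Laurent polynomial. -/
def initialFormL (V : ValSetup K 𝕜) {n : ℕ} (w : Fin n → ℝ) (f : LaurentPoly K n) :
    LaurentPoly 𝕜 n :=
  ∑ u ∈ f.coeff.support.filter (fun u => V.val (f.coeff u) + dotZ w u = V.tropL f w),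
    AddMonoidAlgebra.single u (V.res (V.t (-(V.val (f.coeff u))) * f.coeff u))

/-- The initial ideal `in_w(I) ⊆ 𝕜[x_1^{±1},…,x_n^{±1}]` of an ideal of Laurent polynomials. -/
def initialIdealL (V : ValSetup K 𝕜) {n : ℕ} (w : Fin n → ℝ) (I : Ideal (LaurentPoly K n)) :
    Ideal (LaurentPoly 𝕜 n) :=
  Ideal.span {g | ∃ f ∈ I, g = V.initialFormL w f}

/-- The tropical hypersurface `trop(V(f))` of a Laurent polynomial `f = Σ_u c_u x^u`:
the set of `w ∈ ℝ^n` at which the minimum `min{val(c_u) + w·u : c_u ≠ 0}` is achieved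
at least twice. -/
def tropHyp (V : ValSetup K 𝕜) {n : ℕ} (f : LaurentPoly K n) : Set (Fin n → ℝ) :=
  {w | ∃ u₁ ∈ f.coeff.support, ∃ u₂ ∈ f.coeff.support, u₁ ≠ u₂ ∧
    V.val (f.coeff u₁) + dotZ w u₁ = V.val (f.coeff u₂) + dotZ w u₂ ∧
    ∀ u ∈ f.coeff.support, V.val (f.coeff u₁) + dotZ w u₁ ≤ V.val (f.coeff u) + dotZ w u}

/-- `trop(V(I)) = ⋂_{0 ≠ f ∈ I} trop(V(f))` for an ideal of Laurent polynomials. -/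
def tropV (V : ValSetup K 𝕜) {n : ℕ} (I : Ideal (LaurentPoly K n)) : Set (Fin n → ℝ) :=
  ⋂ f ∈ {f : LaurentPoly K n | f ∈ I ∧ f ≠ 0}, V.tropHyp f

end ValSetup

/-- The character of `ℤ^n` given by a point `x` of the torus `(K^*)^n`:
`u ↦ x^u = Π_i x_i^{u_i}`. -/
def torusChar {K : Type} [Field K] {n : ℕ} (x : Fin n → Kˣ) :
    Multiplicative (Fin n → ℤ) →* K where
  toFun u := ∏ i, ((x i : K) ^ ((Multiplicative.toAdd u) i : ℤ))
  map_one' := by simp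
  map_mul' u v := by
    simp only [← Finset.prod_mul_distrib, toAdd_mul, Pi.add_apply]
    refine Finset.prod_congr rfl fun i _ => ?_
    exact zpow_add₀ (x i).ne_zero _ _

/-- Evaluation of Laurent polynomials at a point of the torus `(K^*)^n`, as a `K`-algebra
homomorphism. -/
def torusEval {K : Type} [Field K] {n : ℕ} (x : Fin n → Kˣ) :
    LaurentPoly K n →ₐ[K] K :=
  AddMonoidAlgebra.lift K K (Fin n → ℤ) (torusChar x)

/-- The subvariety of the torus `(K^*)^n` cut out by an ideal of Laurent polynomials. -/
def torusZeros {K : Type} [Field K] {n : ℕ} (J : Ideal (LaurentPoly K n)) :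
    Set (Fin n → Kˣ) :=
  {x | ∀ f ∈ J, torusEval x f = 0}

/-- The ideal `I(X)` of all Laurent polynomials vanishing on a subset `X` of the torus. -/
def vanishingIdeal {K : Type} [Field K] {n : ℕ} (X : Set (Fin n → Kˣ)) :
    Ideal (LaurentPoly K n) where
  carrier := {f | ∀ x ∈ X, torusEval x f = 0}
  add_mem' ha hb x hx := by simp [map_add, ha x hx, hb x hx]
  zero_mem' x hx := by simp
  smul_mem' c f hf x hx := by simp [smul_eq_mul, map_mul, hf x hx]

section Helpers

namespace ValSetup

variable {K 𝕜 : Type} [Field K] [Field 𝕜] (V : ValSetup K 𝕜)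

lemma mem_Gamma_val {a : K} (ha : a ≠ 0) : V.val a ∈ V.Gamma := ⟨a, ha, rfl⟩

lemma zero_mem_Gamma : (0 : ℝ) ∈ V.Gamma := ⟨1, one_ne_zero, V.val_one⟩

lemma Gamma_add {r s : ℝ} (hr : r ∈ V.Gamma) (hs : s ∈ V.Gamma) : r + s ∈ V.Gamma := by
  obtain ⟨a, ha, rfl⟩ := hr
  obtain ⟨b, hb, rfl⟩ := hs
  exact ⟨a * b, mul_ne_zero ha hb, V.val_mul ha hb⟩

lemma val_inv {a : K} (ha : a ≠ 0) : V.val a⁻¹ = -V.val a := by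
  have h := V.val_mul ha (inv_ne_zero ha)
  rw [mul_inv_cancel₀ ha, V.val_one] at h
  linarith

lemma Gamma_neg {r : ℝ} (hr : r ∈ V.Gamma) : -r ∈ V.Gamma := by
  obtain ⟨a, ha, rfl⟩ := hr
  exact ⟨a⁻¹, inv_ne_zero ha, V.val_inv ha⟩

lemma Gamma_nsmul {r : ℝ} (hr : r ∈ V.Gamma) (m : ℕ) : (m : ℝ) * r ∈ V.Gamma := by
  induction m with
  | zero => simpa using V.zero_mem_Gamma
  | succ k ih =>
    have := V.Gamma_add ih hr
    push_cast
    convert this using 1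
    ring

lemma Gamma_zsmul {r : ℝ} (hr : r ∈ V.Gamma) (m : ℤ) : (m : ℝ) * r ∈ V.Gamma := by
  rcases le_or_gt 0 m with h | h
  · lift m to ℕ using h
    exact_mod_cast V.Gamma_nsmul hr m
  · have hm : ((-m).toNat : ℝ) = -(m : ℝ) := by
      exact_mod_cast Int.toNat_of_nonneg (by omega : (0:ℤ) ≤ -m)
    have : (m : ℝ) * r = -(((-m).toNat : ℝ) * r) := by rw [hm]; ring
    rw [this]
    exact V.Gamma_neg (V.Gamma_nsmul hr _)

lemma Gamma_sum {ι : Type*} (s : Finset ι) (g : ι → ℝ) (hg : ∀ i ∈ s, g i ∈ V.Gamma) :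
    ∑ i ∈ s, g i ∈ V.Gamma := by
  classical
  induction s using Finset.induction with
  | empty => simpa using V.zero_mem_Gamma
  | insert _ _ hx ih =>
    rw [Finset.sum_insert hx]
    exact V.Gamma_add (hg _ (Finset.mem_insert_self _ _))
      (ih fun i hi => hg i (Finset.mem_insert_of_mem hi))

lemma Gamma_dotZ {n : ℕ} {w : Fin n → ℝ} (hw : ∀ i, w i ∈ V.Gamma) (u : Fin n → ℤ) :
    dotZ w u ∈ V.Gamma :=
  V.Gamma_sum _ _ fun i _ => by rw [mul_comm]; exact V.Gamma_zsmul (hw i) _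

lemma t_zero : V.t 0 = 1 := by
  have h0 : (0 : ℝ) ∈ V.Gamma := V.zero_mem_Gamma
  have h := V.t_add h0 h0
  rw [add_zero] at h
  have hne := V.t_ne_zero h0
  field_simp at h
  exact h.symm

lemma t_neg {r : ℝ} (hr : r ∈ V.Gamma) : V.t (-r) = (V.t r)⁻¹ := by
  have h := V.t_add hr (V.Gamma_neg hr)
  rw [add_neg_cancel, V.t_zero] at h
  exact eq_inv_of_mul_eq_one_right h.symm

lemma t_zsmul {r : ℝ} (hr : r ∈ V.Gamma) (m : ℤ) : V.t ((m : ℝ) * r) = V.t r ^ m := by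
  have hnat : ∀ k : ℕ, V.t ((k : ℝ) * r) = V.t r ^ (k : ℕ) := by
    intro k
    induction k with
    | zero => simpa using V.t_zero
    | succ j ih =>
      have := V.t_add (V.Gamma_nsmul hr j) hr
      push_cast
      rw [show ((j : ℝ) + 1) * r = (j : ℝ) * r + r by ring, this, ih, pow_succ]
  rcases le_or_gt 0 m with h | h
  · lift m to ℕ using h
    rw [zpow_natCast]
    exact_mod_cast hnat m
  · have hm : ((-m).toNat : ℝ) = -(m : ℝ) := by
      exact_mod_cast Int.toNat_of_nonneg (by omega : (0:ℤ) ≤ -m)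
    have h2 := hnat (-m).toNat
    rw [hm] at h2
    rw [show (m : ℝ) * r = -(-(m:ℝ) * r) by ring, V.t_neg (by
        rw [← hm]; exact_mod_cast V.Gamma_nsmul hr _), h2]
    rw [← zpow_natCast, ← zpow_neg]
    congr 1
    omega

lemma t_sum {ι : Type*} (s : Finset ι) (g : ι → ℝ) (hg : ∀ i ∈ s, g i ∈ V.Gamma) :
    V.t (∑ i ∈ s, g i) = ∏ i ∈ s, V.t (g i) := by
  classical
  induction s using Finset.induction with
  | empty => simpa using V.t_zero
  | insert _ _ hx ih =>
    rename_i a s' _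
    rw [Finset.sum_insert hx, Finset.prod_insert hx,
      V.t_add (hg _ (Finset.mem_insert_self _ _))
        (V.Gamma_sum _ _ fun i hi => hg i (Finset.mem_insert_of_mem hi)),
      ih fun i hi => hg i (Finset.mem_insert_of_mem hi)]

lemma t_dotZ {n : ℕ} {w : Fin n → ℝ} (hw : ∀ i, w i ∈ V.Gamma) (u : Fin n → ℤ) :
    V.t (dotZ w u) = ∏ i, V.t (w i) ^ (u i) := by
  rw [dotZ, V.t_sum _ _ fun i _ => by rw [mul_comm]; exact V.Gamma_zsmul (hw i) _]
  exact Finset.prod_congr rfl fun i _ => by rw [mul_comm]; exact V.t_zsmul (hw i) _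

/-- The "units of the valuation ring" predicate. -/
def V0 (a : K) : Prop := a ≠ 0 ∧ V.val a = 0

lemma V0_mul {a b : K} (ha : V.V0 a) (hb : V.V0 b) : V.V0 (a * b) :=
  ⟨mul_ne_zero ha.1 hb.1, by rw [V.val_mul ha.1 hb.1, ha.2, hb.2, add_zero]⟩

lemma V0_inv {a : K} (ha : V.V0 a) : V.V0 a⁻¹ :=
  ⟨inv_ne_zero ha.1, by rw [V.val_inv ha.1, ha.2, neg_zero]⟩

lemma V0_pow {a : K} (ha : V.V0 a) (k : ℕ) : V.V0 (a ^ k) := by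
  induction k with
  | zero => rw [pow_zero]; exact ⟨one_ne_zero, V.val_one⟩
  | succ j ih => rw [pow_succ]; exact V.V0_mul ih ha

lemma V0_zpow {a : K} (ha : V.V0 a) (m : ℤ) : V.V0 (a ^ m) := by
  rcases m with k | k
  · rw [Int.ofNat_eq_coe, zpow_natCast]; exact V.V0_pow ha k
  · rw [zpow_negSucc]; exact V.V0_inv (V.V0_pow ha _)

lemma V0_prod {ι : Type*} (s : Finset ι) (g : ι → K) (hg : ∀ i ∈ s, V.V0 (g i)) :
    V.V0 (∏ i ∈ s, g i) := by
  classical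
  induction s using Finset.induction with
  | empty => exact ⟨one_ne_zero, V.val_one⟩
  | insert _ _ hx ih =>
    rw [Finset.prod_insert hx]
    exact V.V0_mul (hg _ (Finset.mem_insert_self _ _))
      (ih fun i hi => hg i (Finset.mem_insert_of_mem hi))

lemma res_mul0 {a b : K} (ha : V.V0 a) (hb : V.V0 b) : V.res (a * b) = V.res a * V.res b :=
  V.res_mul (Or.inr ha.2.ge) (Or.inr hb.2.ge)

lemma res_ne_zero {a : K} (ha : V.V0 a) : V.res a ≠ 0 := by
  intro h
  rw [V.res_eq_zero_iff ha.1 ha.2.ge] at h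
  rw [ha.2] at h
  exact lt_irrefl 0 h

lemma res_inv0 {a : K} (ha : V.V0 a) : V.res a⁻¹ = (V.res a)⁻¹ := by
  have h := V.res_mul0 ha (V.V0_inv ha)
  rw [mul_inv_cancel₀ ha.1, V.res_one] at h
  exact eq_inv_of_mul_eq_one_right h.symm

lemma res_zpow0 {a : K} (ha : V.V0 a) (m : ℤ) : V.res (a ^ m) = V.res a ^ m := by
  have hnat : ∀ k : ℕ, V.res (a ^ k) = V.res a ^ k := by
    intro k
    induction k with
    | zero => simpa using V.res_one
    | succ j ih => rw [pow_succ, pow_succ, V.res_mul0 (V.V0_pow ha j) ha, ih]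
  rcases m with k | k
  · rw [Int.ofNat_eq_coe, zpow_natCast, zpow_natCast]; exact hnat k
  · rw [zpow_negSucc, zpow_negSucc, V.res_inv0 (V.V0_pow ha _), hnat]

lemma res_prod0 {ι : Type*} (s : Finset ι) (g : ι → K) (hg : ∀ i ∈ s, V.V0 (g i)) :
    V.res (∏ i ∈ s, g i) = ∏ i ∈ s, V.res (g i) := by
  classical
  induction s using Finset.induction with
  | empty => simpa using V.res_one
  | insert _ _ hx ih =>
    rw [Finset.prod_insert hx, Finset.prod_insert hx,
      V.res_mul0 (hg _ (Finset.mem_insert_self _ _))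
        (V.V0_prod _ _ fun i hi => hg i (Finset.mem_insert_of_mem hi)),
      ih fun i hi => hg i (Finset.mem_insert_of_mem hi)]

end ValSetup

end Helpers

section Scale

variable {𝕜 : Type} [Field 𝕜] {n : ℕ}

/-- The character `u ↦ c^u x^u`. -/
def scaleChar (c : Fin n → 𝕜) (hc : ∀ i, c i ≠ 0) :
    Multiplicative (Fin n → ℤ) →* LaurentPoly 𝕜 n where
  toFun u := AddMonoidAlgebra.single (Multiplicative.toAdd u)
    (∏ i, c i ^ (Multiplicative.toAdd u i))
  map_one' := by
    simp [AddMonoidAlgebra.one_def]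
  map_mul' u v := by
    rw [AddMonoidAlgebra.single_mul_single]
    simp only [toAdd_mul, Pi.add_apply]
    congr 1
    rw [← Finset.prod_mul_distrib]
    exact Finset.prod_congr rfl fun i _ => zpow_add₀ (hc i) _ _

/-- The scaling algebra homomorphism `x^u ↦ c^u x^u`. -/
def scaleHom (c : Fin n → 𝕜) (hc : ∀ i, c i ≠ 0) :
    LaurentPoly 𝕜 n →ₐ[𝕜] LaurentPoly 𝕜 n :=
  AddMonoidAlgebra.lift 𝕜 (LaurentPoly 𝕜 n) (Fin n → ℤ) (scaleChar c hc)

lemma scaleHom_single (c : Fin n → 𝕜) (hc : ∀ i, c i ≠ 0) (u : Fin n → ℤ) (a : 𝕜) :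
    scaleHom c hc (AddMonoidAlgebra.single u a) = AddMonoidAlgebra.single u (a * ∏ i, c i ^ (u i)) := by
  rw [scaleHom, AddMonoidAlgebra.lift_single]
  simp [scaleChar, AddMonoidAlgebra.smul_single', smul_eq_mul]

lemma scaleHom_comp (c : Fin n → 𝕜) (hc : ∀ i, c i ≠ 0) :
    (scaleHom c hc).comp (scaleHom (fun i => (c i)⁻¹) (fun i => inv_ne_zero (hc i)))
      = AlgHom.id 𝕜 (LaurentPoly 𝕜 n) := by
  apply AddMonoidAlgebra.algHom_ext
  intro u
  rw [AlgHom.comp_apply, scaleHom_single, scaleHom_single, AlgHom.id_apply]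
  congr 1
  rw [one_mul, ← Finset.prod_mul_distrib]
  rw [Finset.prod_eq_one fun i _ => by
    rw [inv_zpow, inv_mul_cancel₀ (zpow_ne_zero _ (hc i))]]
  exact Subsingleton.elim _ _

/-- The scaling algebra automorphism `x^u ↦ c^u x^u`. -/
def scaleEquiv (c : Fin n → 𝕜) (hc : ∀ i, c i ≠ 0) :
    LaurentPoly 𝕜 n ≃ₐ[𝕜] LaurentPoly 𝕜 n :=
  AlgEquiv.ofAlgHom (scaleHom c hc)
    (scaleHom (fun i => (c i)⁻¹) (fun i => inv_ne_zero (hc i)))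
    (scaleHom_comp c hc)
    (by
      have := scaleHom_comp (fun i => (c i)⁻¹) (fun i => inv_ne_zero (hc i))
      simpa using this)

lemma scaleEquiv_single (c : Fin n → 𝕜) (hc : ∀ i, c i ≠ 0) (u : Fin n → ℤ) (a : 𝕜) :
    scaleEquiv c hc (AddMonoidAlgebra.single u a) = AddMonoidAlgebra.single u (a * ∏ i, c i ^ (u i)) :=
  scaleHom_single c hc u a

end Scale

/-- (Remark 2.11.)  Let `φ₁, φ₂ : Γ → K^*` be two splittings of the valuation (encoded here
as two setups `V₁, V₂` sharing the same valuation and the same reduction map), let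
`w ∈ Γ^n` and let `I ⊆ K[x_1^{±1},…,x_n^{±1}]` be an ideal.  Then there is a `𝕜`-algebra
automorphism `ψ` of `𝕜[x_1^{±1},…,x_n^{±1}]`, given on variables by
`x_i ↦ (φ₁(w_i)/φ₂(w_i))‾ · x_i`, such that `ψ(in_w^{φ₂}(I)) = in_w^{φ₁}(I)`. -/
theorem initialIdeal_splitting_independent {K 𝕜 : Type} [Field K] [Field 𝕜]
    (V₁ V₂ : ValSetup K 𝕜) (hval : V₁.val = V₂.val) (hres : V₁.res = V₂.res)
    {n : ℕ} (w : Fin n → ℝ) (hw : ∀ i, w i ∈ V₁.Gamma) (I : Ideal (LaurentPoly K n)) :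
    ∃ ψ : LaurentPoly 𝕜 n ≃ₐ[𝕜] LaurentPoly 𝕜 n,
      (∀ i : Fin n,
        ψ (AddMonoidAlgebra.single (Pi.single i (1:ℤ)) (1:𝕜))
          = AddMonoidAlgebra.single (Pi.single i (1:ℤ)) (V₁.res (V₁.t (w i) * (V₂.t (w i))⁻¹))) ∧
      Ideal.map ψ (V₂.initialIdealL w I) = V₁.initialIdealL w I := by
  classical
  have hGamma : V₂.Gamma = V₁.Gamma := by unfold ValSetup.Gamma; rw [hval]
  have hw₂ : ∀ i, w i ∈ V₂.Gamma := fun i => hGamma ▸ hw i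
  set d : Fin n → K := fun i => V₁.t (w i) * (V₂.t (w i))⁻¹ with hd_def
  have hd : ∀ i, V₁.V0 (d i) := by
    intro i
    have h1 : V₁.t (w i) ≠ 0 := V₁.t_ne_zero (hw i)
    have h2 : V₂.t (w i) ≠ 0 := V₂.t_ne_zero (hw₂ i)
    refine ⟨mul_ne_zero h1 (inv_ne_zero h2), ?_⟩
    show V₁.val (V₁.t (w i) * (V₂.t (w i))⁻¹) = 0
    rw [V₁.val_mul h1 (inv_ne_zero h2), V₁.val_inv h2, V₁.val_t (hw i), hval,
      V₂.val_t (hw₂ i)]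
    ring
  set c : Fin n → 𝕜 := fun i => V₁.res (d i) with hc_def
  have hc : ∀ i, c i ≠ 0 := fun i => V₁.res_ne_zero (hd i)
  refine ⟨scaleEquiv c hc, ?_, ?_⟩
  · intro i
    rw [scaleEquiv_single]
    congr 1
    rw [one_mul]
    rw [Finset.prod_eq_single i (fun j _ hj => by
      rw [Pi.single_eq_of_ne hj, zpow_zero]) (by simp)]
    rw [Pi.single_eq_same, zpow_one]
  · -- key lemma
    have key : ∀ f : LaurentPoly K n, ∃ α : 𝕜, α ≠ 0 ∧
        scaleEquiv c hc (V₂.initialFormL w f) = α • V₁.initialFormL w f := by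
      intro f
      have htrop : V₂.tropL f w = V₁.tropL f w := by
        unfold ValSetup.tropL; rw [hval]
      have hfil : (f.coeff.support.filter fun u => V₂.val (f.coeff u) + dotZ w u = V₂.tropL f w)
          = (f.coeff.support.filter fun u => V₁.val (f.coeff u) + dotZ w u = V₁.tropL f w) := by
        rw [htrop, hval]
      set S := f.coeff.support.filter fun u => V₁.val (f.coeff u) + dotZ w u = V₁.tropL f w with hS_def
      rcases S.eq_empty_or_nonempty with hS | ⟨u₀, hu₀⟩
      · refine ⟨1, one_ne_zero, ?_⟩
        rw [ValSetup.initialFormL, ValSetup.initialFormL, hfil, ← hS_def, hS]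
        simp
      · set T := V₁.tropL f w with hT_def
        rw [hS_def, Finset.mem_filter] at hu₀
        obtain ⟨hu₀s, hu₀T⟩ := hu₀
        have hfu₀ : f.coeff u₀ ≠ 0 := Finsupp.mem_support_iff.mp hu₀s
        have hTΓ : T ∈ V₁.Gamma := by
          rw [← hu₀T]
          exact V₁.Gamma_add (V₁.mem_Gamma_val hfu₀) (V₁.Gamma_dotZ hw u₀)
        have hTΓ₂ : T ∈ V₂.Gamma := hGamma ▸ hTΓ
        have ht1T : V₁.t T ≠ 0 := V₁.t_ne_zero hTΓ
        have ht2T : V₂.t T ≠ 0 := V₂.t_ne_zero hTΓ₂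
        have hB : V₁.V0 (V₁.t T * (V₂.t T)⁻¹) := by
          refine ⟨mul_ne_zero ht1T (inv_ne_zero ht2T), ?_⟩
          rw [V₁.val_mul ht1T (inv_ne_zero ht2T), V₁.val_inv ht2T, V₁.val_t hTΓ, hval,
            V₂.val_t hTΓ₂]
          ring
        refine ⟨V₁.res (V₁.t T * (V₂.t T)⁻¹), V₁.res_ne_zero hB, ?_⟩
        rw [ValSetup.initialFormL, ValSetup.initialFormL, hfil, ← hS_def, map_sum,
          Finset.smul_sum]
        refine Finset.sum_congr rfl fun u hu => ?_
        rw [hS_def, Finset.mem_filter] at hu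
        obtain ⟨hus, huT⟩ := hu
        have hfu : f.coeff u ≠ 0 := Finsupp.mem_support_iff.mp hus
        rw [scaleEquiv_single, AddMonoidAlgebra.smul_single']
        congr 1
        -- coefficient identity
        set v := V₁.val (f.coeff u) with hv_def
        have hvΓ : v ∈ V₁.Gamma := V₁.mem_Gamma_val hfu
        have hdotΓ : dotZ w u ∈ V₁.Gamma := V₁.Gamma_dotZ hw u
        have hdotΓ₂ : dotZ w u ∈ V₂.Gamma := hGamma ▸ hdotΓ
        have hnvΓ : -v ∈ V₁.Gamma := V₁.Gamma_neg hvΓ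
        have hnvΓ₂ : -v ∈ V₂.Gamma := hGamma ▸ hnvΓ
        have hval2 : V₂.val (f.coeff u) = v := by rw [← hval]
        have ht1nv : V₁.t (-v) ≠ 0 := V₁.t_ne_zero hnvΓ
        have ht2nv : V₂.t (-v) ≠ 0 := V₂.t_ne_zero hnvΓ₂
        -- V0 facts
        have hA : V₁.V0 (V₂.t (-v) * f.coeff u) := by
          refine ⟨mul_ne_zero ht2nv hfu, ?_⟩
          rw [V₁.val_mul ht2nv hfu, ← hv_def, hval, V₂.val_t hnvΓ₂]
          ring
        have hC : V₁.V0 (V₁.t (-v) * f.coeff u) := by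
          refine ⟨mul_ne_zero ht1nv hfu, ?_⟩
          rw [V₁.val_mul ht1nv hfu, V₁.val_t hnvΓ, ← hv_def]
          ring
        have hD : V₁.V0 (∏ i, d i ^ (u i)) :=
          V₁.V0_prod _ _ fun i _ => V₁.V0_zpow (hd i) _
        -- product of residues
        have hprodres : (∏ i, c i ^ (u i)) = V₁.res (∏ i, d i ^ (u i)) := by
          rw [V₁.res_prod0 _ _ fun i _ => V₁.V0_zpow (hd i) _]
          exact Finset.prod_congr rfl fun i _ => (V₁.res_zpow0 (hd i) _).symm
        -- the K-level identity
        have hKid : (V₂.t (-v) * f.coeff u) * (∏ i, d i ^ (u i))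
            = (V₁.t T * (V₂.t T)⁻¹) * (V₁.t (-v) * f.coeff u) := by
          have hprodd : (∏ i, d i ^ (u i))
              = V₁.t (dotZ w u) * (V₂.t (dotZ w u))⁻¹ := by
            rw [V₁.t_dotZ hw u, V₂.t_dotZ hw₂ u, ← Finset.prod_inv_distrib,
              ← Finset.prod_mul_distrib]
            exact Finset.prod_congr rfl fun i _ => by rw [mul_zpow, inv_zpow]
          have hsplit : ∀ (W : ValSetup K 𝕜), dotZ w u ∈ W.Gamma → T ∈ W.Gamma →
              W.t (-v) = W.t (dotZ w u) * (W.t T)⁻¹ := by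
            intro W h1 h2
            rw [show -v = dotZ w u + (-T) by linarith [huT], W.t_add h1 (W.Gamma_neg h2),
              W.t_neg h2]
          rw [hprodd, hsplit V₁ hdotΓ hTΓ, hsplit V₂ hdotΓ₂ hTΓ₂]
          have h1d : V₁.t (dotZ w u) ≠ 0 := V₁.t_ne_zero hdotΓ
          have h2d : V₂.t (dotZ w u) ≠ 0 := V₂.t_ne_zero hdotΓ₂
          field_simp
        calc V₂.res (V₂.t (-(V₂.val (f.coeff u))) * f.coeff u) * ∏ i, c i ^ (u i)
            = V₁.res (V₂.t (-v) * f.coeff u) * V₁.res (∏ i, d i ^ (u i)) := by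
              rw [← hres, hval2, hprodres]
          _ = V₁.res ((V₂.t (-v) * f.coeff u) * (∏ i, d i ^ (u i))) := (V₁.res_mul0 hA hD).symm
          _ = V₁.res ((V₁.t T * (V₂.t T)⁻¹) * (V₁.t (-v) * f.coeff u)) := by rw [hKid]
          _ = V₁.res (V₁.t T * (V₂.t T)⁻¹) * V₁.res (V₁.t (-(V₁.val (f.coeff u))) * f.coeff u) := by
              rw [V₁.res_mul0 hB hC, hv_def]
    -- ideal equality
    rw [ValSetup.initialIdealL, ValSetup.initialIdealL, Ideal.map_span]
    apply le_antisymm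
    · rw [Ideal.span_le]
      rintro g ⟨g', ⟨f, hf, rfl⟩, rfl⟩
      obtain ⟨α, hα, hψ⟩ := key f
      show (scaleEquiv c hc) (V₂.initialFormL w f) ∈ _
      rw [hψ, Algebra.smul_def]
      exact Ideal.mul_mem_left _ _ (Ideal.subset_span ⟨f, hf, rfl⟩)
    · rw [Ideal.span_le]
      rintro g ⟨f, hf, rfl⟩
      obtain ⟨α, hα, hψ⟩ := key f
      have : V₁.initialFormL w f = α⁻¹ • ((scaleEquiv c hc) (V₂.initialFormL w f)) := by
        rw [hψ, smul_smul, inv_mul_cancel₀ hα, one_smul]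
      rw [this, Algebra.smul_def]
      exact Ideal.mul_mem_left _ _ (Ideal.subset_span ⟨_, ⟨f, hf, rfl⟩, rfl⟩)
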